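/- For a skew-Hermitian matrix s ∈ 𝔲(n), the derivative of the matrix exponential satisfies: for all z ∈ 𝔲(n), exp(is)⁻¹ · (d/dt)|_{t=0} exp(is + itz) = ((1 - cos(ad s))/(ad s)) z + i ((sin(ad s))/(ad s)) z, where (1-cos x)/x and sin(x)/x are interpreted as entire power series evaluated at the operator ad s. -/

import Mathlib

open NormedSpace

attribute [local instance] Matrix.linftyOpNormedAddCommGroup Matrix.linftyOpNormedRing
  Matrix.linftyOpNormedAlgebra


open Finset

theorem beta_sum (p q : ℕ) :
    ∑ i ∈ range (p + 1), (-1 : ℂ) ^ i * (p.choose i) / ((q : ℂ) + i + 1)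
      = p.factorial * q.factorial / (p + q + 1).factorial := by
  induction p generalizing q with
  | zero =>
    have hq1 : ((q:ℂ) + 1) ≠ 0 := Nat.cast_add_one_ne_zero q
    have hq : ((q.factorial : ℂ)) ≠ 0 := by exact_mod_cast q.factorial_ne_zero
    have e : ((0 + q + 1).factorial : ℂ) = ((q:ℂ) + 1) * q.factorial := by
      rw [Nat.zero_add, Nat.factorial_succ]; push_cast; ring
    simp only [range_one, sum_singleton, pow_zero, Nat.choose_self, Nat.choose_zero_right,
      Nat.cast_one, one_mul, Nat.cast_zero, zero_add, Nat.factorial_zero, e]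
    have e5 : (((q+1)).factorial : ℂ) = ((q:ℂ) + 1) * q.factorial := by
      rw [Nat.factorial_succ]; push_cast; ring
    rw [e5]
    field_simp
    ring
  | succ p ih =>
    -- the sum for p+1 splits as S(p,q) - S(p,q+1)
    have key : ∑ i ∈ range (p + 1 + 1), (-1 : ℂ) ^ i * ((p+1).choose i) / ((q : ℂ) + i + 1)
        = (∑ i ∈ range (p + 1), (-1 : ℂ) ^ i * (p.choose i) / ((q : ℂ) + i + 1))
          - (∑ i ∈ range (p + 1), (-1 : ℂ) ^ i * (p.choose i) / (((q:ℂ) + 1) + i + 1)) := by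
      rw [Finset.sum_range_succ'
        (fun i => (-1 : ℂ) ^ i * ((p+1).choose i) / ((q : ℂ) + i + 1)) (p+1)]
      have expand : ∑ i ∈ range (p+1),
          (-1 : ℂ) ^ (i+1) * ((p+1).choose (i+1)) / ((q : ℂ) + (↑(i+1) : ℂ) + 1)
            = ∑ i ∈ range (p+1),
              (-((-1 : ℂ) ^ i * (p.choose i) / (((q:ℂ) + 1) + i + 1))
                + (-1 : ℂ) ^ (i+1) * (p.choose (i+1)) / ((q : ℂ) + (↑(i+1) : ℂ) + 1)) := by
        refine Finset.sum_congr rfl fun i _ => ?_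
        have hc : (((p+1).choose (i+1) : ℂ)) = p.choose i + p.choose (i+1) := by
          exact_mod_cast Nat.choose_succ_succ p i
        rw [hc]; push_cast; ring
      rw [expand, Finset.sum_add_distrib, Finset.sum_neg_distrib]
      have h3 : ∑ i ∈ range (p+1),
          ((-1 : ℂ) ^ (i+1) * (p.choose (i+1)) / ((q : ℂ) + (↑(i+1) : ℂ) + 1))
          = (∑ i ∈ range (p + 1), (-1 : ℂ) ^ i * (p.choose i) / ((q : ℂ) + i + 1))
            - 1 / ((q : ℂ) + 1) := by
        rw [Finset.sum_range_succ
          (fun i => (-1 : ℂ) ^ (i+1) * (p.choose (i+1)) / ((q : ℂ) + (↑(i+1) : ℂ) + 1)) p]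
        rw [Finset.sum_range_succ'
          (fun i => (-1 : ℂ) ^ i * (p.choose i) / ((q : ℂ) + i + 1)) p]
        simp [Nat.choose_succ_self]
      rw [h3]
      simp only [Nat.choose_zero_right, Nat.cast_one, Nat.cast_zero, one_mul]
      push_cast
      ring
    rw [key, ih q]
    have ihq1 := ih (q+1)
    push_cast at ihq1
    rw [ihq1]
    have h2 : ((p + q + 1).factorial : ℂ) ≠ 0 := by exact_mod_cast (p+q+1).factorial_ne_zero
    have hpf : ((p.factorial : ℂ)) ≠ 0 := by exact_mod_cast p.factorial_ne_zero
    have hqf : ((q.factorial : ℂ)) ≠ 0 := by exact_mod_cast q.factorial_ne_zero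
    have e1 : ((p + 1 + q + 1).factorial : ℂ) = ((p:ℂ) + q + 2) * (p + q + 1).factorial := by
      have h : p + 1 + q + 1 = (p + q + 1) + 1 := by ring
      rw [h, Nat.factorial_succ]; push_cast; ring
    have e2 : ((p + (q + 1) + 1).factorial : ℂ) = ((p:ℂ) + q + 2) * (p + q + 1).factorial := by
      have h : p + (q + 1) + 1 = (p + q + 1) + 1 := by ring
      rw [h, Nat.factorial_succ]; push_cast; ring
    have e3 : (((p+1)).factorial : ℂ) = ((p:ℂ) + 1) * p.factorial := by
      rw [Nat.factorial_succ]; push_cast; ring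
    have e4 : (((q+1)).factorial : ℂ) = ((q:ℂ) + 1) * q.factorial := by
      rw [Nat.factorial_succ]; push_cast; ring
    have hpq2 : ((p:ℂ) + q + 2) ≠ 0 := by
      have := Nat.cast_add_one_ne_zero (p + q + 1) (R := ℂ)
      push_cast at this
      intro h; apply this; rw [← h]; ring
    rw [e1, e2, e3, e4]
    field_simp
    ring

theorem coeff_sum (p q : ℕ) :
    ∑ i ∈ range (p + 1),
        ((-1:ℂ)^i * ((q+i).choose i)) / (((p-i).factorial : ℂ) * ((q+i+1).factorial))
      = 1 / ((p + q + 1).factorial : ℂ) := by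
  have hpf : ((p.factorial : ℂ)) ≠ 0 := by exact_mod_cast p.factorial_ne_zero
  have hqf : ((q.factorial : ℂ)) ≠ 0 := by exact_mod_cast q.factorial_ne_zero
  have h : ∀ i ∈ range (p+1),
      ((-1:ℂ)^i * ((q+i).choose i)) / (((p-i).factorial : ℂ) * ((q+i+1).factorial))
        = (1/((p.factorial:ℂ) * q.factorial)) * ((-1:ℂ)^i * (p.choose i)/((q:ℂ)+i+1)) := by
    intro i hi
    have hip : i ≤ p := Nat.lt_succ_iff.mp (mem_range.mp hi)
    have hA : (((q+i).choose i : ℂ)) * i.factorial * q.factorial = ((q+i).factorial : ℂ) := by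
      have := Nat.choose_mul_factorial_mul_factorial (Nat.le_add_left i q)
      rw [Nat.add_sub_cancel] at this
      exact_mod_cast this
    have hB : ((p.choose i : ℂ)) * i.factorial * (p-i).factorial = (p.factorial : ℂ) := by
      exact_mod_cast Nat.choose_mul_factorial_mul_factorial hip
    have hC : (((q+i+1).factorial : ℂ)) = ((q:ℂ)+i+1) * ((q+i).factorial : ℂ) := by
      rw [Nat.factorial_succ]; push_cast; ring
    have hif : ((i.factorial : ℂ)) ≠ 0 := by exact_mod_cast i.factorial_ne_zero
    have hpif : (((p-i).factorial : ℂ)) ≠ 0 := by exact_mod_cast (p-i).factorial_ne_zero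
    have hqif : (((q+i).factorial : ℂ)) ≠ 0 := by exact_mod_cast (q+i).factorial_ne_zero
    have hqi1 : ((q:ℂ)+i+1) ≠ 0 := by
      have := Nat.cast_add_one_ne_zero (q + i) (R := ℂ)
      push_cast at this
      exact this
    rw [hC]
    field_simp
    linear_combination (-1:ℂ) *
      (((((q+i).choose i : ℕ) : ℂ) * (q.factorial : ℂ)) * hB
        - (((p.choose i : ℕ) : ℂ) * ((p-i).factorial : ℂ)) * hA)
  rw [Finset.sum_congr rfl h, ← Finset.mul_sum, beta_sum p q]
  have hn : (((p+q+1).factorial : ℂ)) ≠ 0 := by exact_mod_cast (p+q+1).factorial_ne_zero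
  field_simp

variable {n : ℕ}

-- check instances

theorem pow_hasDerivAt (A B : Matrix (Fin n) (Fin n) ℂ) (N : ℕ) (y : ℝ) :
    HasDerivAt (fun t : ℝ => (A + (t : ℂ) • B) ^ N)
      (∑ j ∈ range N,
        (A + (y:ℂ) • B) ^ j * B * (A + (y:ℂ) • B) ^ (N - 1 - j)) y := by
  induction N with
  | zero =>
    simp
    exact hasDerivAt_const y (1 : Matrix (Fin n) (Fin n) ℂ)
  | succ N ih =>
    have hX : HasDerivAt (fun t : ℝ => A + (t : ℂ) • B) B y := by
      have h1 : HasDerivAt (fun t : ℝ => t • B) ((1:ℝ) • B) y :=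
        (hasDerivAt_id y).smul_const B
      have h2 : (fun t : ℝ => A + (t : ℂ) • B) = fun t : ℝ => A + t • B := by
        funext t; rw [Complex.coe_smul]
      rw [h2]
      have h3 := (hasDerivAt_const y A).add h1
      simp at h3
      exact h3
    have := ih.mul hX
    have hfun : (fun t : ℝ => (A + (t:ℂ) • B) ^ (N+1))
        = fun t : ℝ => (A + (t:ℂ) • B) ^ N * (A + (t:ℂ) • B) := by
      funext t; rw [pow_succ]
    rw [hfun]
    convert (id this : HasDerivAt (fun t : ℝ => (A + (t:ℂ) • B) ^ N * (A + (t:ℂ) • B)) _ y) using 1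
    rw [Finset.sum_range_succ, Finset.sum_mul]
    congr 1
    · refine Finset.sum_congr rfl fun j hj => ?_
      have hj' : j < N := mem_range.mp hj
      have he : N + 1 - 1 - j = (N - 1 - j) + 1 := by omega
      rw [he, pow_succ, ← mul_assoc]
    · have he : N + 1 - 1 - N = 0 := by omega
      rw [he, pow_zero, mul_one]

theorem norm_pow_mul_le (X B : Matrix (Fin n) (Fin n) ℂ) (j : ℕ) :
    ‖X ^ j * B‖ ≤ ‖X‖ ^ j * ‖B‖ := by
  induction j with
  | zero => simp
  | succ j ih =>
    calc ‖X ^ (j+1) * B‖ = ‖X * (X ^ j * B)‖ := by rw [pow_succ']; rw [mul_assoc]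
      _ ≤ ‖X‖ * ‖X ^ j * B‖ := norm_mul_le _ _
      _ ≤ ‖X‖ * (‖X‖ ^ j * ‖B‖) := by gcongr
      _ = ‖X‖ ^ (j+1) * ‖B‖ := by rw [pow_succ']; ring

theorem norm_mul_pow_le (B X : Matrix (Fin n) (Fin n) ℂ) (j : ℕ) :
    ‖B * X ^ j‖ ≤ ‖B‖ * ‖X‖ ^ j := by
  induction j with
  | zero => simp
  | succ j ih =>
    calc ‖B * X ^ (j+1)‖ = ‖(B * X ^ j) * X‖ := by rw [pow_succ, ← mul_assoc]
      _ ≤ ‖B * X ^ j‖ * ‖X‖ := norm_mul_le _ _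
      _ ≤ (‖B‖ * ‖X‖ ^ j) * ‖X‖ := by gcongr
      _ = ‖B‖ * ‖X‖ ^ (j+1) := by rw [pow_succ]; ring

theorem norm_term_le (A B : Matrix (Fin n) (Fin n) ℂ) (N : ℕ) (X : Matrix (Fin n) (Fin n) ℂ)
    (hX : ‖X‖ ≤ ‖A‖ + ‖B‖) :
    ‖∑ j ∈ range N, X ^ j * B * X ^ (N - 1 - j)‖ ≤ N * ((‖A‖ + ‖B‖) ^ (N-1) * ‖B‖) := by
  calc ‖∑ j ∈ range N, X ^ j * B * X ^ (N - 1 - j)‖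
      ≤ ∑ j ∈ range N, ‖X ^ j * B * X ^ (N - 1 - j)‖ := norm_sum_le _ _
    _ ≤ ∑ j ∈ range N, (‖A‖ + ‖B‖) ^ (N-1) * ‖B‖ := by
        refine Finset.sum_le_sum fun j hj => ?_
        have hj' : j < N := mem_range.mp hj
        calc ‖X ^ j * B * X ^ (N - 1 - j)‖
            ≤ ‖X ^ j * B‖ * ‖X‖ ^ (N-1-j) := norm_mul_pow_le _ _ _
          _ ≤ (‖X‖ ^ j * ‖B‖) * ‖X‖ ^ (N-1-j) :=
              mul_le_mul_of_nonneg_right (norm_pow_mul_le X B j)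
                (pow_nonneg (norm_nonneg _) _)
          _ = ‖X‖ ^ (N - 1) * ‖B‖ := by
              rw [mul_right_comm, ← pow_add]
              congr 2
              omega
          _ ≤ (‖A‖ + ‖B‖) ^ (N-1) * ‖B‖ := by
              gcongr
    _ = N * ((‖A‖ + ‖B‖) ^ (N-1) * ‖B‖) := by
        rw [Finset.sum_const, card_range, nsmul_eq_mul]

theorem exp_hasDerivAt (A B : Matrix (Fin n) (Fin n) ℂ) :
    HasDerivAt (fun t : ℝ => exp (A + (t : ℂ) • B))
      (∑' N : ℕ, ((N.factorial : ℂ))⁻¹ •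
        ∑ j ∈ range N, A ^ j * B * A ^ (N - 1 - j)) 0 := by
  set C := ‖A‖ + ‖B‖ with hC
  have hC0 : 0 ≤ C := by positivity
  set u : ℕ → ℝ := fun N => (N.factorial : ℝ)⁻¹ * (N * (C ^ (N-1) * ‖B‖)) with hu_def
  have hu : Summable u := by
    rw [← summable_nat_add_iff 1]
    have : (fun N => u (N + 1)) = fun N => ‖B‖ * (C ^ N / N.factorial) := by
      funext N
      have : ((N+1).factorial : ℝ) = (N+1) * N.factorial := by
        exact_mod_cast Nat.factorial_succ N
      simp only [hu_def, this, Nat.add_sub_cancel]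
      have h1 : ((N:ℝ) + 1) ≠ 0 := by positivity
      have h2 : ((N.factorial : ℝ)) ≠ 0 := by exact_mod_cast N.factorial_ne_zero
      push_cast
      field_simp
    rw [this]
    exact (Real.summable_pow_div_factorial C).mul_left _
  set g : ℕ → ℝ → Matrix (Fin n) (Fin n) ℂ :=
    fun N t => ((N.factorial : ℂ))⁻¹ • (A + (t:ℂ) • B) ^ N with hg_def
  set g' : ℕ → ℝ → Matrix (Fin n) (Fin n) ℂ :=
    fun N t => ((N.factorial : ℂ))⁻¹ •
      ∑ j ∈ range N, (A + (t:ℂ) • B) ^ j * B * (A + (t:ℂ) • B) ^ (N - 1 - j) with hg'_def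
  have key : HasDerivAt (fun t : ℝ => ∑' N, g N t) (∑' N, g' N 0) 0 := by
    refine hasDerivAt_tsum_of_isPreconnected hu (Metric.isOpen_ball (x := (0:ℝ)) (ε := 1))
      (convex_ball (0:ℝ) 1).isPreconnected
      (fun N y _ => (id ((pow_hasDerivAt A B N y).const_smul ((N.factorial : ℂ))⁻¹) :
        HasDerivAt (g N) (g' N y) y))
      (fun N y hy => ?_) (Metric.mem_ball_self one_pos) ?_
      (Metric.mem_ball_self one_pos)
    · -- norm bound
      have hy1 : |y| < 1 := by simpa [Real.dist_eq] using hy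
      have hXn : ‖A + (y:ℂ) • B‖ ≤ C := by
        calc ‖A + (y:ℂ) • B‖ ≤ ‖A‖ + ‖(y:ℂ) • B‖ := norm_add_le _ _
          _ ≤ ‖A‖ + ‖B‖ := by
              rw [norm_smul]
              have : ‖(y:ℂ)‖ = |y| := by
                rw [Complex.norm_real]
                rfl
              rw [this]
              nlinarith [norm_nonneg B, abs_nonneg y]
      rw [hg'_def]
      simp only [norm_smul]
      have hnf : ‖((N.factorial : ℂ))⁻¹‖ = ((N.factorial : ℝ))⁻¹ := by
        rw [norm_inv]
        congr 1
        rw [Complex.norm_natCast]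
      rw [hnf, hu_def]
      exact mul_le_mul_of_nonneg_left (norm_term_le A B N _ hXn) (by positivity)
    · -- summability at 0
      have : (fun N => g N 0) = fun N => ((N.factorial : ℂ))⁻¹ • A ^ N := by
        funext N
        simp [hg_def]
      rw [this]
      exact expSeries_summable' (𝕂 := ℂ) A
  have hfun : (fun t : ℝ => ∑' N, g N t) = fun t : ℝ => exp (A + (t:ℂ) • B) := by
    funext t
    rw [exp_eq_tsum (𝕂 := ℂ)]
  rw [hfun] at key
  convert key using 2 with N
  simp [hg'_def]

/-- iterate as power of (R - L) -/
theorem iter_eq_pow (A B : Matrix (Fin n) (Fin n) ℂ) (k : ℕ) :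
    (fun X => X * A - A * X)^[k] B
      = ((LinearMap.mulRight ℂ A - LinearMap.mulLeft ℂ A) ^ k) B := by
  induction k with
  | zero => simp
  | succ k ih =>
    rw [Function.iterate_succ_apply', ih, pow_succ',
      Module.End.mul_apply, LinearMap.sub_apply, LinearMap.mulRight_apply,
      LinearMap.mulLeft_apply]

set_option maxHeartbeats 2000000 in
theorem iter_expand (A B : Matrix (Fin n) (Fin n) ℂ) (k : ℕ) :
    (fun X => X * A - A * X)^[k] B
      = ∑ i ∈ range (k+1),
          ((-1:ℂ) ^ i * ((k.choose i : ℕ) : ℂ)) • (A ^ i * B * A ^ (k - i)) := by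
  rw [iter_eq_pow]
  have hc0 : Commute (LinearMap.mulRight ℂ A)
      (LinearMap.mulLeft ℂ A : Module.End ℂ (Matrix (Fin n) (Fin n) ℂ)) :=
    (LinearMap.commute_mulLeft_right A A).symm
  have hc : Commute (LinearMap.mulRight ℂ A) (-(LinearMap.mulLeft ℂ A)) := hc0.neg_right
  have h2 : (LinearMap.mulRight ℂ A - LinearMap.mulLeft ℂ A) ^ k
      = ∑ m ∈ range (k + 1),
          (LinearMap.mulRight ℂ A) ^ m * (-(LinearMap.mulLeft ℂ A)) ^ (k - m) *
            (k.choose m : Module.End ℂ (Matrix (Fin n) (Fin n) ℂ)) := by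
    rw [sub_eq_add_neg]
    exact hc.add_pow k
  rw [h2, LinearMap.sum_apply]
  conv_rhs => rw [← Finset.sum_range_reflect]
  refine Finset.sum_congr rfl fun d hd => ?_
  have hdk : d ≤ k := Nat.lt_succ_iff.mp (mem_range.mp hd)
  have e1 : k + 1 - 1 - d = k - d := by omega
  have e2 : k - (k - d) = d := by omega
  have e3 : k.choose (k - d) = k.choose d := Nat.choose_symm hdk
  rw [e1, e2, e3]
  have hL : (-(LinearMap.mulLeft ℂ A)) = (-1:ℂ) • LinearMap.mulLeft ℂ A :=
    (neg_one_smul ℂ (LinearMap.mulLeft ℂ A)).symm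
  rw [hL, smul_pow, Module.End.mul_apply, Module.End.mul_apply,
    LinearMap.pow_mulRight, LinearMap.pow_mulLeft]
  simp only [Module.End.natCast_apply, LinearMap.smul_apply, LinearMap.mulLeft_apply,
    LinearMap.mulRight_apply]
  rw [← Nat.cast_smul_eq_nsmul ℂ (k.choose d) B]
  simp only [mul_smul_comm, smul_mul_assoc, smul_smul]

theorem star_identity (A B : Matrix (Fin n) (Fin n) ℂ) (N : ℕ) :
    ∑ mk ∈ Finset.HasAntidiagonal.antidiagonal N,
        ((mk.1.factorial : ℂ))⁻¹ •
          (A ^ mk.1 * (((mk.2 + 1).factorial : ℂ))⁻¹ • (fun X => X * A - A * X)^[mk.2] B)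
      = (((N + 1).factorial : ℂ))⁻¹ •
          ∑ j ∈ range (N + 1), A ^ j * B * A ^ (N - j) := by
  -- expand each w and make a sigma sum
  have step1 : ∀ mk ∈ Finset.HasAntidiagonal.antidiagonal N,
      ((mk.1.factorial : ℂ))⁻¹ •
          (A ^ mk.1 * (((mk.2 + 1).factorial : ℂ))⁻¹ • (fun X => X * A - A * X)^[mk.2] B)
        = ∑ i ∈ range (mk.2 + 1),
            (((-1:ℂ)^i * ((mk.2.choose i : ℕ) : ℂ)) /
              ((mk.1.factorial : ℂ) * ((mk.2 + 1).factorial : ℂ))) •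
              (A ^ (mk.1 + i) * B * A ^ (mk.2 - i)) := by
    intro mk _
    rw [iter_expand, Finset.smul_sum, Finset.mul_sum, Finset.smul_sum]
    refine Finset.sum_congr rfl fun i hi => ?_
    rw [smul_smul, mul_smul_comm, smul_smul, pow_add]
    congr 1
    · rw [div_eq_mul_inv, mul_inv]
      ring
    · simp [mul_assoc]
  rw [Finset.sum_congr rfl step1, Finset.sum_sigma']
  -- reindex the sigma sum
  have step2 : ∑ x ∈ (Finset.HasAntidiagonal.antidiagonal N).sigma (fun mk => range (mk.2 + 1)),
        (((-1:ℂ)^x.2 * ((x.1.2.choose x.2 : ℕ) : ℂ)) /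
          ((x.1.1.factorial : ℂ) * ((x.1.2 + 1).factorial : ℂ))) •
          (A ^ (x.1.1 + x.2) * B * A ^ (x.1.2 - x.2))
      = ∑ x ∈ (Finset.HasAntidiagonal.antidiagonal N).sigma (fun pq => range (pq.1 + 1)),
        (((-1:ℂ)^x.2 * (((x.1.2 + x.2).choose x.2 : ℕ) : ℂ)) /
          (((x.1.1 - x.2).factorial : ℂ) * ((x.1.2 + x.2 + 1).factorial : ℂ))) •
          (A ^ x.1.1 * B * A ^ x.1.2) := by
    refine Finset.sum_nbij' (fun x => ⟨(x.1.1 + x.2, x.1.2 - x.2), x.2⟩)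
      (fun x => ⟨(x.1.1 - x.2, x.1.2 + x.2), x.2⟩) ?_ ?_ ?_ ?_ ?_
    · rintro ⟨⟨m, k⟩, i⟩ hx
      simp only [Finset.mem_sigma, Finset.HasAntidiagonal.mem_antidiagonal, mem_range] at hx ⊢
      omega
    · rintro ⟨⟨p, q⟩, i⟩ hx
      simp only [Finset.mem_sigma, Finset.HasAntidiagonal.mem_antidiagonal, mem_range] at hx ⊢
      omega
    · rintro ⟨⟨m, k⟩, i⟩ hx
      simp only [Finset.mem_sigma, Finset.HasAntidiagonal.mem_antidiagonal, mem_range] at hx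
      simp only [Sigma.mk.inj_iff, Prod.mk.injEq]
      refine ⟨⟨by omega, by omega⟩, by simp⟩
    · rintro ⟨⟨p, q⟩, i⟩ hx
      simp only [Finset.mem_sigma, Finset.HasAntidiagonal.mem_antidiagonal, mem_range] at hx
      simp only [Sigma.mk.inj_iff, Prod.mk.injEq]
      refine ⟨⟨by omega, by omega⟩, by simp⟩
    · rintro ⟨⟨m, k⟩, i⟩ hx
      simp only [Finset.mem_sigma, Finset.HasAntidiagonal.mem_antidiagonal, mem_range] at hx
      have h1 : k - i + i = k := by omega
      have h2 : m + i - i = m := by omega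
      simp only [h1, h2]
  rw [step2, Finset.sum_sigma]
  rw [← Finset.Nat.sum_antidiagonal_eq_sum_range_succ_mk
    (fun pq => A ^ pq.1 * B * A ^ pq.2) N]
  rw [Finset.smul_sum]
  refine Finset.sum_congr rfl fun pq hpq => ?_
  dsimp only
  rw [← Finset.sum_smul]
  have hpq' : pq.1 + pq.2 = N := Finset.HasAntidiagonal.mem_antidiagonal.mp hpq
  have hc := coeff_sum pq.1 pq.2
  rw [hpq'] at hc
  rw [hc, one_div]

theorem norm_iter_le (A B : Matrix (Fin n) (Fin n) ℂ) (k : ℕ) :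
    ‖(fun X => X * A - A * X)^[k] B‖ ≤ (2 * ‖A‖) ^ k * ‖B‖ := by
  induction k with
  | zero => simp
  | succ k ih =>
    rw [Function.iterate_succ_apply']
    calc ‖(fun X => X * A - A * X)^[k] B * A - A * (fun X => X * A - A * X)^[k] B‖
        ≤ ‖(fun X => X * A - A * X)^[k] B * A‖ + ‖A * (fun X => X * A - A * X)^[k] B‖ :=
          norm_sub_le _ _
      _ ≤ ‖(fun X => X * A - A * X)^[k] B‖ * ‖A‖ + ‖A‖ * ‖(fun X => X * A - A * X)^[k] B‖ := by
          gcongr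
          · exact norm_mul_le _ _
          · exact norm_mul_le _ _
      _ = (2 * ‖A‖) * ‖(fun X => X * A - A * X)^[k] B‖ := by ring
      _ ≤ (2 * ‖A‖) * ((2 * ‖A‖) ^ k * ‖B‖) := by
          exact mul_le_mul_of_nonneg_left ih (by positivity)
      _ = (2 * ‖A‖) ^ (k+1) * ‖B‖ := by rw [pow_succ]; ring

theorem summable_S_norm (A B : Matrix (Fin n) (Fin n) ℂ) :
    Summable (fun k => ‖(((k+1).factorial : ℂ))⁻¹ • (fun X => X * A - A * X)^[k] B‖) := by
  refine Summable.of_nonneg_of_le (fun k => norm_nonneg _)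
    (fun k => ?_) (((Real.summable_pow_div_factorial (2 * ‖A‖)).mul_left ‖B‖))
  rw [norm_smul, norm_inv]
  have h1 : ‖(((k+1).factorial : ℕ) : ℂ)‖ = (((k+1).factorial : ℕ) : ℝ) :=
    Complex.norm_natCast _
  rw [h1]
  have h2 : ((k.factorial : ℝ)) ≤ (((k+1).factorial : ℕ) : ℝ) := by
    exact_mod_cast Nat.factorial_le (Nat.le_succ k)
  have h3 : (0:ℝ) < k.factorial := by exact_mod_cast k.factorial_pos
  calc (((k+1).factorial : ℝ))⁻¹ * ‖(fun X => X * A - A * X)^[k] B‖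
      ≤ ((k.factorial : ℝ))⁻¹ * ((2 * ‖A‖) ^ k * ‖B‖) := by
        exact mul_le_mul (inv_anti₀ h3 h2) (norm_iter_le A B k) (norm_nonneg _)
          (by positivity)
    _ = ‖B‖ * ((2 * ‖A‖) ^ k / k.factorial) := by ring

theorem cauchy_step (A B : Matrix (Fin n) (Fin n) ℂ) :
    exp A * (∑' k : ℕ, (((k+1).factorial : ℂ))⁻¹ • (fun X => X * A - A * X)^[k] B)
      = ∑' N : ℕ, ((N.factorial : ℂ))⁻¹ •
          ∑ j ∈ range N, A ^ j * B * A ^ (N - 1 - j) := by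
  rw [exp_eq_tsum (𝕂 := ℂ)]
  beta_reduce
  erw [tsum_mul_tsum_eq_tsum_sum_antidiagonal_of_summable_norm
    (norm_expSeries_summable' (𝕂 := ℂ) A) (summable_S_norm A B)]
  -- identify term-by-term
  have hterm : ∀ N : ℕ, ∑ mk ∈ Finset.HasAntidiagonal.antidiagonal N,
      (((mk.1.factorial : ℂ))⁻¹ • A ^ mk.1) *
        ((((mk.2+1).factorial : ℂ))⁻¹ • (fun X => X * A - A * X)^[mk.2] B)
      = (((N+1).factorial : ℂ))⁻¹ •
          ∑ j ∈ range (N + 1), A ^ j * B * A ^ (N + 1 - 1 - j) := by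
    intro N
    have hNN : ∀ j, N + 1 - 1 - j = N - j := fun j => by omega
    have h5 : ∑ j ∈ range (N + 1), A ^ j * B * A ^ (N + 1 - 1 - j)
        = ∑ j ∈ range (N + 1), A ^ j * B * A ^ (N - j) :=
      Finset.sum_congr rfl fun j _ => by rw [hNN j]
    rw [h5, ← star_identity A B N]
    refine Finset.sum_congr rfl fun mk _ => ?_
    rw [smul_mul_assoc]
  erw [tsum_congr hterm]
  -- shift the index on the right
  have hsummable : Summable (fun N : ℕ => ((N.factorial : ℂ))⁻¹ •
      ∑ j ∈ range N, A ^ j * B * A ^ (N - 1 - j)) := by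
    refine Summable.of_norm ?_
    refine Summable.of_nonneg_of_le
      (f := fun N : ℕ => (N.factorial : ℝ)⁻¹ * (N * ((‖A‖ + ‖B‖) ^ (N-1) * ‖B‖)))
      (fun N => norm_nonneg _) (fun N => ?_) ?_
    · rw [norm_smul, norm_inv, Complex.norm_natCast]
      refine mul_le_mul_of_nonneg_left ?_ (by positivity)
      exact norm_term_le A B N A (by
        have : (0:ℝ) ≤ ‖B‖ := norm_nonneg _
        linarith)
    · -- summability of the bound
      rw [← summable_nat_add_iff 1]
      have heq : (fun N : ℕ => (((N+1).factorial : ℕ) : ℝ)⁻¹ *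
            (((N+1 : ℕ) : ℝ) * ((‖A‖ + ‖B‖) ^ (N+1-1) * ‖B‖)))
          = fun N : ℕ => ‖B‖ * ((‖A‖ + ‖B‖) ^ N / (N.factorial : ℝ)) := by
        funext N
        have h4 : ((N+1).factorial : ℝ) = (N+1) * N.factorial := by
          exact_mod_cast Nat.factorial_succ N
        simp only [h4, Nat.add_sub_cancel]
        have h1 : ((N:ℝ) + 1) ≠ 0 := by positivity
        have h2 : ((N.factorial : ℝ)) ≠ 0 := by exact_mod_cast N.factorial_ne_zero
        push_cast
        field_simp
      rw [heq]
      exact (Real.summable_pow_div_factorial _).mul_left _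
  rw [Summable.tsum_eq_zero_add hsummable]
  simp only [range_zero, sum_empty, smul_zero, zero_add]

theorem iter_smul (s z : Matrix (Fin n) (Fin n) ℂ) (k : ℕ) :
    (fun X => X * (Complex.I • s) - (Complex.I • s) * X)^[k] (Complex.I • z)
      = ((-Complex.I)^k * Complex.I) • ((fun X => s * X - X * s)^[k] z) := by
  induction k with
  | zero => simp
  | succ k ih =>
    rw [Function.iterate_succ_apply', Function.iterate_succ_apply', ih]
    simp only [smul_mul_assoc, mul_smul_comm, smul_smul, smul_sub, sub_smul, pow_succ]
    module

theorem stmt5' (s z : Matrix (Fin n) (Fin n) ℂ)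
    (D : Matrix (Fin n) (Fin n) ℂ)
    (hD : HasDerivAt
      (fun t : ℝ => exp (Complex.I • s + (t : ℂ) • (Complex.I • z))) D 0) :
    (exp (Complex.I • s))⁻¹ * D =
      (∑' j : ℕ, ((-1 : ℂ) ^ j / (2 * j + 2).factorial) •
          ((fun X => s * X - X * s)^[2 * j + 1] z)) +
        Complex.I • (∑' j : ℕ, ((-1 : ℂ) ^ j / (2 * j + 1).factorial) •
          ((fun X => s * X - X * s)^[2 * j] z)) := by
  set A := Complex.I • s with hA
  set B := Complex.I • z with hB
  have hDeq : D = ∑' N : ℕ, ((N.factorial : ℂ))⁻¹ •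
      ∑ j ∈ range N, A ^ j * B * A ^ (N - 1 - j) :=
    hD.unique (exp_hasDerivAt A B)
  set F : ℕ → Matrix (Fin n) (Fin n) ℂ :=
    fun k => (((k+1).factorial : ℂ))⁻¹ • (fun X => X * A - A * X)^[k] B with hF_def
  have hF : Summable F := (summable_S_norm A B).of_norm
  have hstep : (exp A)⁻¹ * D = ∑' k, F k := by
    rw [hDeq, ← cauchy_step A B, ← Matrix.exp_neg, ← mul_assoc,
      ← Matrix.exp_add_of_commute (-A) A (Commute.refl A).neg_left,
      neg_add_cancel, exp_zero, one_mul]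
  rw [hstep]
  -- even/odd split
  have hEven : Summable (fun j => F (2*j)) :=
    hF.comp_injective (fun a b h => by omega)
  have hOdd : Summable (fun j => F (2*j+1)) :=
    hF.comp_injective (fun a b h => by omega)
  have hsplit := (hEven.hasSum.even_add_odd hOdd.hasSum).tsum_eq
  rw [hsplit, add_comm]
  congr 1
  · -- odd part
    refine tsum_congr fun j => ?_
    rw [hF_def]
    simp only
    rw [iter_smul s z (2*j+1), smul_smul]
    have hsc : (((2*j+1)+1).factorial : ℂ)⁻¹ * ((-Complex.I) ^ (2*j+1) * Complex.I)
        = (-1 : ℂ) ^ j / ((2*j+2).factorial : ℂ) := by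
      have h1 : (-Complex.I) ^ (2*j+1) * Complex.I = (-1 : ℂ) ^ j := by
        rw [pow_succ, pow_mul]
        have : (-Complex.I) ^ 2 = (-1 : ℂ) := by
          rw [neg_sq, Complex.I_sq]
        rw [this]
        rw [mul_assoc]
        simp [Complex.I_mul_I]
      have h2 : (2*j+1)+1 = 2*j+2 := by omega
      rw [h1, h2, div_eq_mul_inv, mul_comm]
    rw [hsc]
  · -- even part
    have hiter : ∀ j : ℕ, F (2*j)
        = Complex.I • (((-1 : ℂ) ^ j / ((2*j+1).factorial : ℂ)) •
            ((fun X => s * X - X * s)^[2*j] z)) := by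
      intro j
      rw [hF_def]
      simp only
      rw [iter_smul s z (2*j), smul_smul, smul_smul]
      congr 1
      have h1 : (-Complex.I) ^ (2*j) = (-1 : ℂ) ^ j := by
        rw [pow_mul, neg_sq, Complex.I_sq]
      rw [h1, div_eq_mul_inv]
      ring
    rw [tsum_congr hiter]
    have hg : Summable (fun j => ((-1 : ℂ) ^ j / ((2*j+1).factorial : ℂ)) •
        ((fun X => s * X - X * s)^[2*j] z)) := by
      have : (fun j => ((-1 : ℂ) ^ j / ((2*j+1).factorial : ℂ)) •
          ((fun X => s * X - X * s)^[2*j] z))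
          = fun j => (-Complex.I) • F (2*j) := by
        funext j
        rw [hiter j, smul_smul]
        simp [Complex.I_mul_I]
      rw [this]
      exact hEven.const_smul _
    exact Summable.tsum_const_smul _ hg

/-- For skew-Hermitian `s, z ∈ 𝔲(n)`,
`exp(is)⁻¹ · (d/dt)|₀ exp(is + itz) = ((1-cos(ad s))/(ad s)) z + i (sin(ad s)/(ad s)) z`,
the operator series being `Σ_{j≥0} (-1)^j (ad s)^{2j+1}/(2j+2)!` and
`Σ_{j≥0} (-1)^j (ad s)^{2j}/(2j+1)!`, with `ad s X = sX - Xs`. -/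
theorem stmt5 {n : ℕ} (s z : Matrix (Fin n) (Fin n) ℂ)
    (hs : s.conjTranspose = -s) (hz : z.conjTranspose = -z)
    (D : Matrix (Fin n) (Fin n) ℂ)
    (hD : HasDerivAt
      (fun t : ℝ => exp (Complex.I • s + (t : ℂ) • (Complex.I • z))) D 0) :
    (exp (Complex.I • s))⁻¹ * D =
      (∑' j : ℕ, ((-1 : ℂ) ^ j / (2 * j + 2).factorial) •
          ((fun X => s * X - X * s)^[2 * j + 1] z)) +
        Complex.I • (∑' j : ℕ, ((-1 : ℂ) ^ j / (2 * j + 1).factorial) •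
          ((fun X => s * X - X * s)^[2 * j] z)) :=
  stmt5' s z D hD
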